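/- arXiv:2510.07898 — 5 statements merged into one kernel-verified Lean document; each statement's English description precedes it below -/
import Mathlib

section
/- For every t_c > 0 and ω₀, Δt, τ ∈ ℝ, ∫_ℝ (t_c/√π)·exp(−t_c²·(ω−ω₀)²)·(1 + cos(ω·Δt))·cos(ω·τ) dω = exp(−τ²/(4t_c²))·cos(ω₀·τ) + (1/2)·exp(−(τ+Δt)²/(4t_c²))·cos(ω₀·(τ+Δt)) + (1/2)·exp(−(τ−Δt)²/(4t_c²))·cos(ω₀·(τ−Δt)). -/
open MeasureTheory

lemma gauss_cexp (b : ℝ) (hb : 0 < b) (μ c : ℝ) :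
    ∫ x : ℝ, Complex.exp (Complex.I * c * x) * Complex.exp (-(b:ℂ) * ((x:ℂ) - μ) ^ 2)
      = (Real.pi / b : ℂ) ^ (1/2 : ℂ) * Complex.exp (-(c:ℂ)^2 / (4*b)) *
        Complex.exp (Complex.I * c * μ) := by
  have hshift : (∫ x : ℝ, Complex.exp (Complex.I * c * x) * Complex.exp (-(b:ℂ) * ((x:ℂ) - μ) ^ 2))
      = ∫ x : ℝ, Complex.exp (Complex.I * c * (x + μ)) * Complex.exp (-(b:ℂ) * (x:ℂ) ^ 2) := by
    rw [← integral_add_right_eq_self (fun x : ℝ ↦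
      Complex.exp (Complex.I * c * x) * Complex.exp (-(b:ℂ) * ((x:ℂ) - μ) ^ 2)) μ]
    congr 1; funext x; push_cast; ring_nf
  rw [hshift]
  have : ∀ x : ℝ, Complex.exp (Complex.I * c * (x + μ)) * Complex.exp (-(b:ℂ) * (x:ℂ) ^ 2)
      = Complex.exp (Complex.I * c * μ) *
        (Complex.exp (Complex.I * c * x) * Complex.exp (-(b:ℂ) * (x:ℂ) ^ 2)) := by
    intro x
    rw [← Complex.exp_add, ← Complex.exp_add, ← Complex.exp_add]
    congr 1; push_cast; ring
  simp_rw [this, integral_const_mul]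
  rw [fourierIntegral_gaussian (by simpa using hb) (c : ℂ)]
  push_cast
  ring

lemma gauss_int (b : ℝ) (hb : 0 < b) (μ c : ℝ) :
    Integrable (fun x : ℝ ↦ Real.exp (-b * (x - μ) ^ 2) * Real.cos (c * x)) := by
  have h := (integrable_exp_neg_mul_sq hb).comp_sub_right μ
  refine h.mono' ?_ ?_
  · exact (Continuous.mul (by continuity) (by continuity)).aestronglyMeasurable
  · filter_upwards with x
    rw [Real.norm_eq_abs, abs_mul]
    calc |Real.exp (-b * (x - μ) ^ 2)| * |Real.cos (c * x)|
        ≤ |Real.exp (-b * (x - μ) ^ 2)| * 1 :=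
          mul_le_mul_of_nonneg_left (Real.abs_cos_le_one _) (abs_nonneg _)
      _ = Real.exp (-b * (x - μ) ^ 2) := by rw [mul_one, abs_of_pos (Real.exp_pos _)]

lemma gauss_cos (b : ℝ) (hb : 0 < b) (μ c : ℝ) :
    ∫ x : ℝ, Real.exp (-b * (x - μ) ^ 2) * Real.cos (c * x)
      = Real.sqrt (Real.pi / b) * Real.exp (-c ^ 2 / (4 * b)) * Real.cos (c * μ) := by
  have hint : Integrable (fun x : ℝ ↦
      Complex.exp (Complex.I * c * x) * Complex.exp (-(b:ℂ) * ((x:ℂ) - μ) ^ 2)) := by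
    have := integrable_cexp_quadratic (b := (b:ℂ)) (by simpa using hb)
      (2 * b * μ + Complex.I * c) (-(b:ℂ) * μ ^ 2)
    refine this.congr (Filter.Eventually.of_forall fun x ↦ ?_)
    simp only [← Complex.exp_add]; congr 1; push_cast; ring
  have hre : ∀ x : ℝ,
      (Complex.exp (Complex.I * c * x) * Complex.exp (-(b:ℂ) * ((x:ℂ) - μ) ^ 2)).re
      = Real.exp (-b * (x - μ) ^ 2) * Real.cos (c * x) := by
    intro x
    have h1 : Complex.exp (-(b:ℂ) * ((x:ℂ) - μ) ^ 2)
        = ((Real.exp (-b * (x - μ) ^ 2) : ℝ) : ℂ) := by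
      rw [Complex.ofReal_exp]; congr 1; push_cast; ring
    have h2 : Complex.I * (c:ℂ) * (x:ℂ) = ((c * x : ℝ) : ℂ) * Complex.I := by
      push_cast; ring
    rw [h1, h2, mul_comm, Complex.re_ofReal_mul, Complex.exp_ofReal_mul_I_re]
  have hL := integral_re (𝕜 := ℂ) hint
  simp only [RCLike.re_to_complex] at hL
  have := congrArg Complex.re (gauss_cexp b hb μ c)
  rw [← hL] at this
  simp_rw [hre] at this
  rw [this]
  have hrhs : ((Real.pi / b : ℂ) ^ (1/2 : ℂ) * Complex.exp (-(c:ℂ)^2 / (4*b)) *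
      Complex.exp (Complex.I * c * μ)).re
      = Real.sqrt (Real.pi / b) * Real.exp (-c ^ 2 / (4 * b)) * Real.cos (c * μ) := by
    have hp : (0:ℝ) ≤ Real.pi / b := div_nonneg Real.pi_pos.le hb.le
    have h1 : (Real.pi / b : ℂ) ^ (1/2 : ℂ) = ((Real.sqrt (Real.pi / b) : ℝ) : ℂ) := by
      rw [Real.sqrt_eq_rpow, Complex.ofReal_cpow hp]; push_cast; ring_nf
    have h2 : Complex.exp (-(c:ℂ)^2 / (4*b)) = ((Real.exp (-c ^ 2 / (4 * b)) : ℝ) : ℂ) := by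
      rw [Complex.ofReal_exp]; congr 1; push_cast; ring
    have h3 : Complex.I * (c:ℂ) * (μ:ℂ) = ((c * μ : ℝ) : ℂ) * Complex.I := by push_cast; ring
    rw [h1, h2, h3, ← Complex.ofReal_mul, Complex.re_ofReal_mul, Complex.exp_ofReal_mul_I_re]
  rw [hrhs]


/-- Expectation of the score-function summand `cos(ν·τ)` under the lensed single-photon
frequency distribution `p(ω|Δt) = (t_c/√π)·exp(−t_c²(ω−ω₀)²)·(1 + cos(ωΔt))`. -/
theorem score_function_expectation
    (tc : ℝ) (htc : 0 < tc) (ω₀ Δt τ : ℝ) :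
    ∫ ω : ℝ, (tc / Real.sqrt Real.pi) * Real.exp (-(tc ^ 2) * (ω - ω₀) ^ 2)
        * (1 + Real.cos (ω * Δt)) * Real.cos (ω * τ)
      = Real.exp (-(τ ^ 2) / (4 * tc ^ 2)) * Real.cos (ω₀ * τ)
        + (1 / 2) * Real.exp (-((τ + Δt) ^ 2) / (4 * tc ^ 2)) * Real.cos (ω₀ * (τ + Δt))
        + (1 / 2) * Real.exp (-((τ - Δt) ^ 2) / (4 * tc ^ 2)) * Real.cos (ω₀ * (τ - Δt)) := by
  have hb : (0:ℝ) < tc ^ 2 := by positivity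
  have hπ : (0:ℝ) < Real.sqrt Real.pi := Real.sqrt_pos.mpr Real.pi_pos
  have hpt : ∀ ω : ℝ, (tc / Real.sqrt Real.pi) * Real.exp (-(tc ^ 2) * (ω - ω₀) ^ 2)
        * (1 + Real.cos (ω * Δt)) * Real.cos (ω * τ)
      = (tc / Real.sqrt Real.pi) * (Real.exp (-(tc ^ 2) * (ω - ω₀) ^ 2) * Real.cos (τ * ω))
        + (tc / (2 * Real.sqrt Real.pi))
            * (Real.exp (-(tc ^ 2) * (ω - ω₀) ^ 2) * Real.cos ((τ + Δt) * ω))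
        + (tc / (2 * Real.sqrt Real.pi))
            * (Real.exp (-(tc ^ 2) * (ω - ω₀) ^ 2) * Real.cos ((τ - Δt) * ω)) := by
    intro ω
    rw [mul_comm ω Δt, mul_comm ω τ, add_mul, sub_mul, Real.cos_add, Real.cos_sub]
    field_simp
    ring
  simp_rw [hpt]
  have hA : Integrable (fun ω : ℝ ↦ tc / Real.sqrt Real.pi
      * (Real.exp (-(tc ^ 2) * (ω - ω₀) ^ 2) * Real.cos (τ * ω))) :=
    (gauss_int _ hb ω₀ τ).const_mul _
  have hB : Integrable (fun ω : ℝ ↦ tc / (2 * Real.sqrt Real.pi)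
      * (Real.exp (-(tc ^ 2) * (ω - ω₀) ^ 2) * Real.cos ((τ + Δt) * ω))) :=
    (gauss_int _ hb ω₀ (τ + Δt)).const_mul _
  have hC : Integrable (fun ω : ℝ ↦ tc / (2 * Real.sqrt Real.pi)
      * (Real.exp (-(tc ^ 2) * (ω - ω₀) ^ 2) * Real.cos ((τ - Δt) * ω))) :=
    (gauss_int _ hb ω₀ (τ - Δt)).const_mul _
  have hAB : Integrable (fun ω : ℝ ↦ tc / Real.sqrt Real.pi
      * (Real.exp (-(tc ^ 2) * (ω - ω₀) ^ 2) * Real.cos (τ * ω))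
      + tc / (2 * Real.sqrt Real.pi)
      * (Real.exp (-(tc ^ 2) * (ω - ω₀) ^ 2) * Real.cos ((τ + Δt) * ω))) := hA.add hB
  rw [integral_add hAB hC, integral_add hA hB,
    integral_const_mul, integral_const_mul, integral_const_mul,
    gauss_cos _ hb ω₀ τ, gauss_cos _ hb ω₀ (τ + Δt), gauss_cos _ hb ω₀ (τ - Δt)]
  have hs : Real.sqrt (Real.pi / tc ^ 2) = Real.sqrt Real.pi / tc := by
    rw [Real.sqrt_div Real.pi_pos.le, Real.sqrt_sq htc.le]
  rw [hs, mul_comm τ ω₀, mul_comm (τ + Δt) ω₀, mul_comm (τ - Δt) ω₀]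
  field_simp
end

section
/- Let ν₁, …, ν_n be i.i.d. real-valued random variables on a probability space. Let Θ be a finite set of real numbers of cardinality M such that E[cos(τ·ν₁)] ≤ 0 for every τ ∈ Θ, and let τ* ∈ ℝ satisfy E[cos(τ*·ν₁)] ≥ 1/2. If n ≥ 32·ln(20·(M+1)), then with probability at least 0.95 the following hold simultaneously: Σ_{j=1}^n cos(τ*·ν_j) ≥ n/4, and Σ_{j=1}^n cos(τ·ν_j) < n/4 for every τ ∈ Θ. -/
open MeasureTheory ProbabilityTheory Real
open scoped ENNReal

section DelayFindingAux


private lemma habs14 : |(1/4:ℝ)| = 1/4 := abs_of_nonneg (by norm_num)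
private lemma habsn14 : |(-(1/4):ℝ)| = 1/4 := by rw [abs_neg, habs14]
private lemma habs132 : |(1/32:ℝ)| = 1/32 := abs_of_nonneg (by norm_num)
private lemma habsn332 : |(-(3/32):ℝ)| = 3/32 := by
  rw [abs_neg]; exact abs_of_nonneg (by norm_num)

lemma exp_quarter_ub : Real.exp (1/4) ≤ 7889/6144 + 1/102400 := by
  have h := Real.exp_bound (x := 1/4) (by rw [habs14]; norm_num) (n := 5) (by norm_num)
  rw [habs14] at h
  simp only [Finset.sum_range_succ, Finset.sum_range_zero] at h
  norm_num [Nat.factorial, abs_le] at h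
  linarith [h.2]

lemma exp_negq_ub : Real.exp (-(1/4)) ≤ 4785/6144 + 1/102400 := by
  have h := Real.exp_bound (x := -(1/4)) (by rw [habsn14]; norm_num) (n := 5) (by norm_num)
  rw [habsn14] at h
  simp only [Finset.sum_range_succ, Finset.sum_range_zero] at h
  norm_num [Nat.factorial, abs_le] at h
  linarith [h.2]

lemma exp_132_lb : 1 + 1/32 + 1/2048 - 1/147456 ≤ Real.exp (1/32) := by
  have h := Real.exp_bound (x := 1/32) (by rw [habs132]; norm_num) (n := 3) (by norm_num)
  rw [habs132] at h
  simp only [Finset.sum_range_succ, Finset.sum_range_zero] at h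
  norm_num [Nat.factorial, abs_le] at h
  linarith [h.1]

lemma exp_n332_lb : (1 - 3/32 + 9/2048 - 9/65536) - 81/20132659 ≤ Real.exp (-(3/32)) := by
  have h := Real.exp_bound (x := -(3/32)) (by rw [habsn332]; norm_num) (n := 4) (by norm_num)
  rw [habsn332] at h
  simp only [Finset.sum_range_succ, Finset.sum_range_zero] at h
  norm_num [Nat.factorial, abs_le] at h
  linarith [h.1]

lemma num1 : (Real.exp (1/4) + Real.exp (-(1/4)))/2 ≤ Real.exp (1/32) := by
  nlinarith [exp_quarter_ub, exp_negq_ub, exp_132_lb]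

lemma num2 : (1/4) * Real.exp (1/4) + (3/4) * Real.exp (-(1/4)) ≤ Real.exp (-(3/32)) := by
  nlinarith [exp_quarter_ub, exp_negq_ub, exp_n332_lb]

variable {Ω : Type*} [MeasurableSpace Ω] {μ : Measure Ω} [IsProbabilityMeasure μ]



lemma integrable_of_bdd {X : Ω → ℝ} (hX : Measurable X) (hb : ∀ ω, |X ω| ≤ 1) :
    Integrable X μ :=
  Integrable.mono' (integrable_const 1) hX.aestronglyMeasurable
    (ae_of_all _ fun ω => by simpa using hb ω)

lemma integrable_exp_mul_of_bdd {X : Ω → ℝ} (hX : Measurable X) (hb : ∀ ω, |X ω| ≤ 1)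
    (t : ℝ) : Integrable (fun ω => Real.exp (t * X ω)) μ := by
  refine Integrable.mono' (integrable_const (Real.exp |t|))
    ((hX.const_mul t).exp.aestronglyMeasurable) (ae_of_all _ fun ω => ?_)
  rw [Real.norm_eq_abs, abs_of_pos (Real.exp_pos _)]
  apply Real.exp_le_exp.mpr
  calc t * X ω ≤ |t * X ω| := le_abs_self _
    _ = |t| * |X ω| := abs_mul _ _
    _ ≤ |t| * 1 := by gcongr; exact hb ω
    _ = |t| := mul_one _

lemma exp_mul_le_convex {t x : ℝ} (hx : |x| ≤ 1) :
    Real.exp (t * x) ≤ ((1 - x)/2) * Real.exp (-t) + ((1 + x)/2) * Real.exp t := by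
  obtain ⟨h1, h2⟩ := abs_le.mp hx
  have h := convexOn_exp.2 (Set.mem_univ (-t)) (Set.mem_univ t)
    (by linarith : (0:ℝ) ≤ (1 - x)/2) (by linarith : (0:ℝ) ≤ (1 + x)/2) (by ring)
  simp only [smul_eq_mul] at h
  calc Real.exp (t * x) = Real.exp ((1 - x)/2 * (-t) + (1 + x)/2 * t) := by ring_nf
    _ ≤ ((1 - x)/2) * Real.exp (-t) + ((1 + x)/2) * Real.exp t := h

lemma mgf_le_of_bdd {X : Ω → ℝ} (hX : Measurable X) (hb : ∀ ω, |X ω| ≤ 1) (t : ℝ) :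
    mgf X μ t ≤ ((1 - ∫ ω, X ω ∂μ)/2) * Real.exp (-t)
      + ((1 + ∫ ω, X ω ∂μ)/2) * Real.exp t := by
  have hXi : Integrable X μ := integrable_of_bdd hX hb
  have h1 : mgf X μ t ≤ ∫ ω, ((Real.exp (-t) + Real.exp t)/2
      + X ω * ((Real.exp t - Real.exp (-t))/2)) ∂μ := by
    refine integral_mono (integrable_exp_mul_of_bdd hX hb t) ?_ fun ω => ?_
    · exact (integrable_const _).add (hXi.mul_const _)
    · have := exp_mul_le_convex (t := t) (hb ω)
      calc Real.exp (t * X ω) ≤ ((1 - X ω)/2) * Real.exp (-t)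
            + ((1 + X ω)/2) * Real.exp t := this
        _ = (Real.exp (-t) + Real.exp t)/2
            + X ω * ((Real.exp t - Real.exp (-t))/2) := by ring
  rw [integral_add (integrable_const _) (hXi.mul_const _), integral_const,
    integral_mul_const] at h1
  simp only [probReal_univ, measure_univ, ENNReal.toReal_one, smul_eq_mul, one_mul] at h1
  calc mgf X μ t ≤ _ := h1
    _ = ((1 - ∫ ω, X ω ∂μ)/2) * Real.exp (-t)
      + ((1 + ∫ ω, X ω ∂μ)/2) * Real.exp t := by ring

omit [IsProbabilityMeasure μ] in
lemma prod_mgf_le {n : ℕ} {X : Fin n → Ω → ℝ}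
    (hind : iIndepFun X μ) (hXm : ∀ j, Measurable (X j))
    {t c : ℝ} (hc : ∀ j, mgf (X j) μ t ≤ c) :
    mgf (∑ j, X j) μ t ≤ c ^ n := by
  rw [hind.mgf_sum hXm]
  calc ∏ j, mgf (X j) μ t ≤ ∏ _j : Fin n, c :=
        Finset.prod_le_prod (fun j _ => mgf_nonneg) (fun j _ => hc j)
    _ = c ^ n := by rw [Finset.prod_const, Finset.card_univ, Fintype.card_fin]

lemma tail_bad {n : ℕ} {X : Fin n → Ω → ℝ}
    (hind : iIndepFun X μ) (hXm : ∀ j, Measurable (X j))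
    (hXb : ∀ j ω, |X j ω| ≤ 1) (hmean : ∀ j, (∫ ω, X j ω ∂μ) ≤ 0) :
    (μ {ω | (n:ℝ)/4 ≤ ∑ j, X j ω}).toReal ≤ Real.exp (-(n:ℝ)/32) := by
  have hee : Real.exp (-(1/4)) ≤ Real.exp (1/4) := Real.exp_le_exp.mpr (by norm_num)
  have hmgf : ∀ j, mgf (X j) μ (1/4) ≤ Real.exp (1/32) := by
    intro j
    refine (mgf_le_of_bdd (hXm j) (hXb j) (1/4)).trans ?_
    have hm := hmean j
    refine le_trans ?_ num1
    nlinarith [Real.exp_pos (1/4:ℝ), Real.exp_pos (-(1/4):ℝ)]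
  have hSint : Integrable (fun ω => Real.exp ((1/4) * (∑ j, X j) ω)) μ :=
    hind.integrable_exp_mul_sum hXm (fun j _ => integrable_exp_mul_of_bdd (hXm j) (hXb j) _)
  have hC := measure_ge_le_exp_mul_mgf (μ := μ) (X := ∑ j, X j) ((n:ℝ)/4)
    (t := 1/4) (by norm_num) hSint
  have hset : {ω | (n:ℝ)/4 ≤ ∑ j, X j ω} = {ω | (n:ℝ)/4 ≤ (∑ j, X j) ω} := by
    ext ω; simp [Finset.sum_apply]
  rw [hset]
  calc (μ {ω | (n:ℝ)/4 ≤ (∑ j, X j) ω}).toReal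
      ≤ Real.exp (-(1/4) * ((n:ℝ)/4)) * mgf (∑ j, X j) μ (1/4) := hC
    _ ≤ Real.exp (-(1/4) * ((n:ℝ)/4)) * Real.exp (1/32) ^ n := by
        have := prod_mgf_le hind hXm hmgf
        exact mul_le_mul_of_nonneg_left this (Real.exp_pos _).le
    _ = Real.exp (-(n:ℝ)/32) := by
        rw [← Real.exp_nat_mul, ← Real.exp_add]
        congr 1; ring

lemma tail_good {n : ℕ} {X : Fin n → Ω → ℝ}
    (hind : iIndepFun X μ) (hXm : ∀ j, Measurable (X j))
    (hXb : ∀ j ω, |X j ω| ≤ 1) (hmean : ∀ j, (1/2 : ℝ) ≤ ∫ ω, X j ω ∂μ) :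
    (μ {ω | ∑ j, X j ω ≤ (n:ℝ)/4}).toReal ≤ Real.exp (-(n:ℝ)/32) := by
  have hee : Real.exp (-(1/4)) ≤ Real.exp (1/4) := Real.exp_le_exp.mpr (by norm_num)
  have hmgf : ∀ j, mgf (X j) μ (-(1/4)) ≤ Real.exp (-(3/32)) := by
    intro j
    refine (mgf_le_of_bdd (hXm j) (hXb j) (-(1/4))).trans ?_
    rw [neg_neg]
    have hm := hmean j
    refine le_trans ?_ num2
    nlinarith [Real.exp_pos (1/4:ℝ), Real.exp_pos (-(1/4):ℝ)]
  have hSint : Integrable (fun ω => Real.exp ((-(1/4)) * (∑ j, X j) ω)) μ :=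
    hind.integrable_exp_mul_sum hXm (fun j _ => integrable_exp_mul_of_bdd (hXm j) (hXb j) _)
  have hC := measure_le_le_exp_mul_mgf (μ := μ) (X := ∑ j, X j) ((n:ℝ)/4)
    (t := -(1/4)) (by norm_num) hSint
  have hset : {ω | ∑ j, X j ω ≤ (n:ℝ)/4} = {ω | (∑ j, X j) ω ≤ (n:ℝ)/4} := by
    ext ω; simp [Finset.sum_apply]
  rw [hset]
  calc (μ {ω | (∑ j, X j) ω ≤ (n:ℝ)/4}).toReal
      ≤ Real.exp (-(-(1/4)) * ((n:ℝ)/4)) * mgf (∑ j, X j) μ (-(1/4)) := hC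
    _ ≤ Real.exp (-(-(1/4)) * ((n:ℝ)/4)) * Real.exp (-(3/32)) ^ n := by
        have := prod_mgf_le hind hXm hmgf
        exact mul_le_mul_of_nonneg_left this (Real.exp_pos _).le
    _ = Real.exp (-(n:ℝ)/32) := by
        rw [← Real.exp_nat_mul, ← Real.exp_add]
        congr 1; ring

end DelayFindingAux

/-- Correctness and sample complexity of the sample-efficient delay-finding algorithm:
given `n` i.i.d. frequency samples `ν₁,…,ν_n`, a finite set `Θ` of `M` bad candidates
whose score summands have nonpositive mean, and a good candidate `τ*` whose score summand
has mean at least `1/2`, if `n ≥ 32·ln(20·(M+1))` then with probability at least `0.95`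
the good candidate's score is at least `n/4` while every bad candidate's score is below
`n/4`. -/
theorem delay_finding_correctness
    {Ω : Type*} [MeasurableSpace Ω] (μ : Measure Ω) [IsProbabilityMeasure μ]
    (n : ℕ) (ν : Fin n → Ω → ℝ)
    (hmeas : ∀ j, Measurable (ν j))
    (hindep : iIndepFun ν μ)
    (hident : ∀ i j, IdentDistrib (ν i) (ν j) μ μ)
    (Θ : Finset ℝ)
    (hbad : ∀ τ ∈ Θ, ∀ j, (∫ ω, Real.cos (τ * ν j ω) ∂μ) ≤ 0)
    (τstar : ℝ)
    (hgood : ∀ j, (1 / 2 : ℝ) ≤ ∫ ω, Real.cos (τstar * ν j ω) ∂μ)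
    (hn : (32 : ℝ) * Real.log (20 * (Θ.card + 1)) ≤ n) :
    ENNReal.ofReal 0.95 ≤
      μ {ω | (n : ℝ) / 4 ≤ ∑ j, Real.cos (τstar * ν j ω) ∧
             ∀ τ ∈ Θ, ∑ j, Real.cos (τ * ν j ω) < (n : ℝ) / 4} := by
  classical
  -- the family of score summands for a candidate τ
  set X : ℝ → Fin n → Ω → ℝ := fun τ j ω => Real.cos (τ * ν j ω) with hX
  have hXm : ∀ τ j, Measurable (X τ j) := fun τ j => ((hmeas j).const_mul τ).cos
  have hXb : ∀ τ j ω, |X τ j ω| ≤ 1 := fun τ j ω => Real.abs_cos_le_one _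
  have hXind : ∀ τ, iIndepFun (X τ) μ := fun τ =>
    hindep.comp (fun _ x => Real.cos (τ * x)) (fun _ => (measurable_const_mul τ).cos)
  -- the key probability bound
  set r : ℝ := 1 / (20 * ((Θ.card : ℝ) + 1)) with hr
  have hKpos : (0:ℝ) < 20 * ((Θ.card : ℝ) + 1) := by positivity
  have hrpos : 0 < r := by positivity
  have hexp_le : Real.exp (-(n:ℝ)/32) ≤ r := by
    have h1 : Real.log (20 * ((Θ.card : ℝ) + 1)) ≤ (n:ℝ)/32 := by linarith
    have h2 : 20 * ((Θ.card : ℝ) + 1) ≤ Real.exp ((n:ℝ)/32) := by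
      calc 20 * ((Θ.card : ℝ) + 1) = Real.exp (Real.log (20 * ((Θ.card : ℝ) + 1))) :=
            (Real.exp_log hKpos).symm
        _ ≤ Real.exp ((n:ℝ)/32) := Real.exp_le_exp.mpr h1
    rw [hr, show -(n:ℝ)/32 = -((n:ℝ)/32) by ring, Real.exp_neg]
    rw [one_div]
    exact inv_anti₀ hKpos h2
  -- measure bounds in ℝ≥0∞
  have hmeasure_le : ∀ (S : Set Ω), (μ S).toReal ≤ Real.exp (-(n:ℝ)/32) →
      μ S ≤ ENNReal.ofReal r := by
    intro S hS
    rw [← ENNReal.ofReal_toReal (measure_ne_top μ S)]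
    exact ENNReal.ofReal_le_ofReal (hS.trans hexp_le)
  have hBg : μ {ω | ∑ j, X τstar j ω ≤ (n:ℝ)/4} ≤ ENNReal.ofReal r :=
    hmeasure_le _ (tail_good (hXind τstar) (hXm τstar) (hXb τstar) hgood)
  have hBbad : ∀ τ ∈ Θ, μ {ω | (n:ℝ)/4 ≤ ∑ j, X τ j ω} ≤ ENNReal.ofReal r := fun τ hτ =>
    hmeasure_le _ (tail_bad (hXind τ) (hXm τ) (hXb τ) (hbad τ hτ))
  -- the target set and its measurability
  set A : Set Ω := {ω | (n : ℝ) / 4 ≤ ∑ j, Real.cos (τstar * ν j ω) ∧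
      ∀ τ ∈ Θ, ∑ j, Real.cos (τ * ν j ω) < (n : ℝ) / 4} with hA
  have hsum_meas : ∀ τ, Measurable (fun ω => ∑ j, X τ j ω) := fun τ =>
    Finset.measurable_sum _ (fun j _ => hXm τ j)
  have hAmeas : MeasurableSet A := by
    have : A = {ω | (n:ℝ)/4 ≤ ∑ j, X τstar j ω} ∩
        ⋂ τ ∈ Θ, {ω | ∑ j, X τ j ω < (n:ℝ)/4} := by
      ext ω; simp [hA, hX]
    rw [this]
    exact (measurableSet_le measurable_const (hsum_meas τstar)).inter
      (Θ.measurableSet_biInter fun τ _ =>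
        measurableSet_lt (hsum_meas τ) measurable_const)
  -- union bound on the complement
  have hcompl : Aᶜ ⊆ {ω | ∑ j, X τstar j ω ≤ (n:ℝ)/4} ∪
      ⋃ τ ∈ Θ, {ω | (n:ℝ)/4 ≤ ∑ j, X τ j ω} := by
    intro ω hω
    simp only [hA, Set.mem_compl_iff, Set.mem_setOf_eq, not_and, not_forall, not_lt] at hω
    by_cases hP : (n:ℝ)/4 ≤ ∑ j, Real.cos (τstar * ν j ω)
    · obtain ⟨τ, hτ, hτ2⟩ := hω hP
      exact Or.inr (Set.mem_iUnion₂.mpr ⟨τ, hτ, hτ2⟩)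
    · exact Or.inl (le_of_not_ge hP)
  have hμcompl : μ Aᶜ ≤ ENNReal.ofReal 0.05 := by
    calc μ Aᶜ ≤ μ ({ω | ∑ j, X τstar j ω ≤ (n:ℝ)/4} ∪
          ⋃ τ ∈ Θ, {ω | (n:ℝ)/4 ≤ ∑ j, X τ j ω}) := measure_mono hcompl
      _ ≤ μ {ω | ∑ j, X τstar j ω ≤ (n:ℝ)/4} +
          μ (⋃ τ ∈ Θ, {ω | (n:ℝ)/4 ≤ ∑ j, X τ j ω}) := measure_union_le _ _
      _ ≤ ENNReal.ofReal r + ∑ τ ∈ Θ, μ {ω | (n:ℝ)/4 ≤ ∑ j, X τ j ω} :=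
          add_le_add hBg (measure_biUnion_finset_le Θ _)
      _ ≤ ENNReal.ofReal r + ∑ τ ∈ Θ, ENNReal.ofReal r := by
          gcongr with τ hτ
          exact hBbad τ hτ
      _ = ENNReal.ofReal r + (Θ.card : ℝ≥0∞) * ENNReal.ofReal r := by
          rw [Finset.sum_const, nsmul_eq_mul]
      _ = ENNReal.ofReal (r + (Θ.card : ℝ) * r) := by
          rw [← ENNReal.ofReal_natCast, ← ENNReal.ofReal_mul (by positivity),
            ← ENNReal.ofReal_add hrpos.le (by positivity)]
      _ = ENNReal.ofReal 0.05 := by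
          congr 1
          rw [hr]
          field_simp
          ring
  -- conclude
  have hadd := measure_add_measure_compl (μ := μ) hAmeas
  have h95 : ENNReal.ofReal 0.95 + μ Aᶜ ≤ μ A + μ Aᶜ := by
    calc ENNReal.ofReal 0.95 + μ Aᶜ ≤ ENNReal.ofReal 0.95 + ENNReal.ofReal 0.05 := by
          gcongr
      _ = 1 := by rw [← ENNReal.ofReal_add (by norm_num) (by norm_num)]; norm_num
      _ = μ A + μ Aᶜ := by rw [hadd, measure_univ]
  exact (ENNReal.add_le_add_iff_right (measure_ne_top μ Aᶜ)).mp h95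
end

section
/- Let Q ∈ (0, 1] and let ν₁, …, ν_n be i.i.d. real-valued random variables on a probability space. Let Θ be a finite set of real numbers of cardinality M such that E[cos(τ·ν₁)] ≤ 0 for every τ ∈ Θ, and let τ* ∈ ℝ satisfy E[cos(τ*·ν₁)] ≥ Q/2. If n ≥ (32/Q²)·ln(20·(M+1)), then with probability at least 0.95 the following hold simultaneously: Σ_{j=1}^n cos(τ*·ν_j) ≥ n·Q/4, and Σ_{j=1}^n cos(τ·ν_j) < n·Q/4 for every τ ∈ Θ. -/
open MeasureTheory ProbabilityTheory

section Aux

lemma exp_taylor4 {x : ℝ} (h : |x| ≤ 1) :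
    |Real.exp x - (1 + x + x^2/2 + x^3/6)| ≤ |x|^4 * (5/96) := by
  have h4 := Real.exp_bound h (by norm_num : (0:ℕ) < 4)
  norm_num [Finset.sum_range_succ, Nat.factorial] at h4
  exact h4

lemma exp_taylor3 {x : ℝ} (h : |x| ≤ 1) :
    |Real.exp x - (1 + x + x^2/2)| ≤ |x|^3 * (2/9) := by
  have h3 := Real.exp_bound h (by norm_num : (0:ℕ) < 3)
  norm_num [Finset.sum_range_succ, Nat.factorial] at h3
  exact h3

lemma analytic_bad {Q : ℝ} (h0 : 0 < Q) (h1 : Q ≤ 1) :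
    (Real.exp (Q/4) + Real.exp (-(Q/4))) / 2 ≤ Real.exp (Q^2/32) := by
  have ha : |Q/4| ≤ 1 := by rw [abs_of_pos (by linarith)]; linarith
  have hb : |(-(Q/4))| ≤ 1 := by rwa [abs_neg]
  have t1 := abs_le.mp (exp_taylor4 ha)
  have t2 := abs_le.mp (exp_taylor4 hb)
  rw [abs_of_pos (by linarith : (0:ℝ) < Q/4)] at t1
  rw [abs_neg, abs_of_pos (by linarith : (0:ℝ) < Q/4)] at t2
  have t3 := Real.quadratic_le_exp_of_nonneg (x := Q^2/32) (by positivity)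
  nlinarith [t1.2, t2.2, t3, pow_pos h0 4]

lemma analytic_good {Q : ℝ} (h0 : 0 < Q) (h1 : Q ≤ 1) :
    (Real.exp (Q/4) + Real.exp (-(Q/4))) / 2
      - Q/2 * ((Real.exp (Q/4) - Real.exp (-(Q/4))) / 2) ≤ Real.exp (-(3*Q^2/32)) := by
  have ha : |Q/4| ≤ 1 := by rw [abs_of_pos (by linarith)]; linarith
  have hb : |(-(Q/4))| ≤ 1 := by rwa [abs_neg]
  have hc : |(-(3*Q^2/32))| ≤ 1 := by
    rw [abs_neg, abs_of_nonneg (by positivity)]; nlinarith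
  have t1 := abs_le.mp (exp_taylor4 ha)
  have t2 := abs_le.mp (exp_taylor4 hb)
  have t3 := abs_le.mp (exp_taylor3 hc)
  rw [abs_of_pos (by linarith : (0:ℝ) < Q/4)] at t1
  rw [abs_neg, abs_of_pos (by linarith : (0:ℝ) < Q/4)] at t2
  rw [abs_neg, abs_of_nonneg (by positivity : (0:ℝ) ≤ 3*Q^2/32)] at t3
  have hB : Q/4 + Q^3/384 - 5*Q^4/24576 ≤ (Real.exp (Q/4) - Real.exp (-(Q/4)))/2 := by
    nlinarith [t1.1, t2.2]
  have hQB := mul_le_mul_of_nonneg_left hB (by linarith : (0:ℝ) ≤ Q/2)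
  have h5 : Q^5 ≤ Q^4 := pow_le_pow_of_le_one h0.le h1 (by norm_num)
  have h6 : Q^6 ≤ Q^4 := pow_le_pow_of_le_one h0.le h1 (by norm_num)
  have h4 : (0:ℝ) < Q^4 := pow_pos h0 4
  nlinarith [t1.2, t2.2, t3.1, hQB, h5, h6, h4]

variable {Ω : Type*} [MeasurableSpace Ω] {μ : Measure Ω} [IsProbabilityMeasure μ]

lemma exp_mul_le_of_abs_le {t x : ℝ} (hx : |x| ≤ 1) :
    Real.exp (t * x) ≤ (Real.exp t + Real.exp (-t)) / 2
      + x * ((Real.exp t - Real.exp (-t)) / 2) := by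
  obtain ⟨h1, h2⟩ := abs_le.mp hx
  have hconv := convexOn_exp.2 (Set.mem_univ t) (Set.mem_univ (-t))
      (show (0:ℝ) ≤ (1 + x)/2 by linarith) (show (0:ℝ) ≤ (1 - x)/2 by linarith)
      (show (1 + x)/2 + (1 - x)/2 = 1 by ring)
  simp only [smul_eq_mul] at hconv
  have harg : (1 + x)/2 * t + (1 - x)/2 * (-t) = t * x := by ring
  rw [harg] at hconv
  exact hconv.trans (le_of_eq (by ring))

lemma integrable_exp_mul_of_abs_le {Y : Ω → ℝ} (hY : Measurable Y)
    (hb : ∀ ω, |Y ω| ≤ 1) (t : ℝ) :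
    Integrable (fun ω => Real.exp (t * Y ω)) μ := by
  refine Integrable.mono' (integrable_const (Real.exp |t|))
    ((hY.const_mul t).exp.aestronglyMeasurable) (ae_of_all _ fun ω => ?_)
  rw [Real.norm_eq_abs, abs_of_pos (Real.exp_pos _)]
  refine Real.exp_le_exp.2 ((le_abs_self _).trans ?_)
  rw [abs_mul]
  exact mul_le_of_le_one_right (abs_nonneg t) (hb ω)

lemma mgf_le_of_abs_le {Y : Ω → ℝ} (hY : Measurable Y) (hb : ∀ ω, |Y ω| ≤ 1) (t : ℝ) :
    mgf Y μ t ≤ (Real.exp t + Real.exp (-t)) / 2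
      + (∫ ω, Y ω ∂μ) * ((Real.exp t - Real.exp (-t)) / 2) := by
  have hYint : Integrable Y μ :=
    Integrable.mono' (integrable_const 1) hY.aestronglyMeasurable
      (ae_of_all _ fun ω => by rw [Real.norm_eq_abs]; exact hb ω)
  have hint : Integrable (fun ω => Real.exp (t * Y ω)) μ :=
    integrable_exp_mul_of_abs_le hY hb t
  calc mgf Y μ t
      ≤ ∫ ω, ((Real.exp t + Real.exp (-t)) / 2
          + Y ω * ((Real.exp t - Real.exp (-t)) / 2)) ∂μ :=
        integral_mono hint ((integrable_const _).add (hYint.mul_const _))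
          (fun ω => exp_mul_le_of_abs_le (hb ω))
    _ = _ := by
        rw [integral_add (integrable_const _) (hYint.mul_const _), integral_const,
          integral_mul_const]
        simp

lemma chernoff_aux {n : ℕ} (X : Fin n → Ω → ℝ) (hm : ∀ j, Measurable (X j))
    (hi : iIndepFun X μ)
    (hb : ∀ j ω, |X j ω| ≤ 1)
    {s : ℝ} (ε c : ℝ) (hs : 0 ≤ s) (hc0 : 0 ≤ c)
    (hc : ∀ j, mgf (X j) μ s ≤ c) :
    (μ {ω | ε ≤ ∑ j, X j ω}).toReal ≤ Real.exp (-s * ε) * c ^ n := by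
  have hint : ∀ j, Integrable (fun ω => Real.exp (s * X j ω)) μ := fun j =>
    integrable_exp_mul_of_abs_le (hm j) (hb j) s
  have h1 := measure_ge_le_exp_mul_mgf (μ := μ) (X := ∑ j, X j) ε hs
      (by simpa using hi.integrable_exp_mul_sum hm (fun j _ => hint j))
  rw [hi.mgf_sum hm] at h1
  have hset : {ω | ε ≤ ∑ j, X j ω} = {ω | ε ≤ (∑ j, X j) ω} := by
    ext ω; simp [Finset.sum_apply]
  rw [hset]
  refine h1.trans (mul_le_mul_of_nonneg_left ?_ (Real.exp_pos _).le)
  calc ∏ j, mgf (X j) μ s ≤ ∏ _j : Fin n, c :=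
        Finset.prod_le_prod (fun j _ => mgf_nonneg) (fun j _ => hc j)
    _ = c ^ n := by simp

end Aux

/-- Noisy-signal version of the correctness of the delay-finding algorithm: with
signal-to-noise ratio `Q ∈ (0,1]`, the good candidate's score summand has mean at least
`Q/2`, the acceptance threshold is `n·Q/4`, and `n ≥ (32/Q²)·ln(20·(M+1))` i.i.d. samples
suffice to succeed with probability at least `0.95`. -/
theorem delay_finding_correctness_noisy
    {Ω : Type*} [MeasurableSpace Ω] (μ : Measure Ω) [IsProbabilityMeasure μ]
    (Q : ℝ) (hQ0 : 0 < Q) (hQ1 : Q ≤ 1)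
    (n : ℕ) (ν : Fin n → Ω → ℝ)
    (hmeas : ∀ j, Measurable (ν j))
    (hindep : iIndepFun ν μ)
    (hident : ∀ i j, IdentDistrib (ν i) (ν j) μ μ)
    (Θ : Finset ℝ)
    (hbad : ∀ τ ∈ Θ, ∀ j, (∫ ω, Real.cos (τ * ν j ω) ∂μ) ≤ 0)
    (τstar : ℝ)
    (hgood : ∀ j, Q / 2 ≤ ∫ ω, Real.cos (τstar * ν j ω) ∂μ)
    (hn : (32 / Q ^ 2) * Real.log (20 * (Θ.card + 1)) ≤ n) :
    ENNReal.ofReal 0.95 ≤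
      μ {ω | (n : ℝ) * Q / 4 ≤ ∑ j, Real.cos (τstar * ν j ω) ∧
             ∀ τ ∈ Θ, ∑ j, Real.cos (τ * ν j ω) < (n : ℝ) * Q / 4} := by
  classical
  set thr : ℝ := (n : ℝ) * Q / 4 with hthr
  set e : ℝ := Real.exp (-((n : ℝ) * Q ^ 2 / 32)) with he
  -- measurability of cos(τ * ν j ·)
  have hmc : ∀ (τ : ℝ) (j : Fin n), Measurable (fun ω => Real.cos (τ * ν j ω)) :=
    fun τ j => Real.measurable_cos.comp ((hmeas j).const_mul τ)
  have hbc : ∀ (τ : ℝ) (j : Fin n) (ω : Ω), |Real.cos (τ * ν j ω)| ≤ 1 :=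
    fun τ j ω => Real.abs_cos_le_one _
  have hic : ∀ (τ : ℝ), iIndepFun
      (fun j ω => Real.cos (τ * ν j ω)) μ :=
    fun τ => hindep.comp (fun _ x => Real.cos (τ * x))
      (fun _ => Real.measurable_cos.comp (measurable_id.const_mul τ))
  have hBge : 0 ≤ (Real.exp (Q/4) - Real.exp (-(Q/4))) / 2 := by
    have := Real.exp_le_exp.2 (by linarith : -(Q/4) ≤ Q/4)
    linarith
  -- bad-candidate tail bound
  have hbadtail : ∀ τ ∈ Θ, (μ {ω | thr ≤ ∑ j, Real.cos (τ * ν j ω)}).toReal ≤ e := by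
    intro τ hτ
    have hmgf : ∀ j, mgf (fun ω => Real.cos (τ * ν j ω)) μ (Q/4) ≤ Real.exp (Q^2/32) := by
      intro j
      refine (mgf_le_of_abs_le (hmc τ j) (hbc τ j) (Q/4)).trans ?_
      have hm := hbad τ hτ j
      have : (∫ ω, Real.cos (τ * ν j ω) ∂μ) * ((Real.exp (Q/4) - Real.exp (-(Q/4))) / 2) ≤ 0 :=
        mul_nonpos_of_nonpos_of_nonneg hm hBge
      have h2 := analytic_bad hQ0 hQ1
      linarith
    have h := chernoff_aux (fun j ω => Real.cos (τ * ν j ω)) (hmc τ) (hic τ)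
      (hbc τ) thr (Real.exp (Q^2/32)) (by linarith) (Real.exp_pos _).le hmgf
    refine h.trans ?_
    rw [← Real.exp_nat_mul, ← Real.exp_add]
    apply Real.exp_le_exp.2
    rw [hthr]; ring_nf; rfl
  -- good-candidate tail bound
  have hgoodtail : (μ {ω | (∑ j, Real.cos (τstar * ν j ω)) ≤ thr}).toReal ≤ e := by
    have hmY : ∀ j, Measurable (fun ω => -Real.cos (τstar * ν j ω)) :=
      fun j => (hmc τstar j).neg
    have hbY : ∀ (j : Fin n) (ω : Ω), |(-Real.cos (τstar * ν j ω))| ≤ 1 := by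
      intro j ω; rw [abs_neg]; exact hbc τstar j ω
    have hiY : iIndepFun
        (fun j ω => -Real.cos (τstar * ν j ω)) μ :=
      hindep.comp (fun _ x => -Real.cos (τstar * x))
        (fun _ => (Real.measurable_cos.comp (measurable_id.const_mul τstar)).neg)
    have hmgf : ∀ j, mgf (fun ω => -Real.cos (τstar * ν j ω)) μ (Q/4)
        ≤ Real.exp (-(3*Q^2/32)) := by
      intro j
      refine (mgf_le_of_abs_le (hmY j) (hbY j) (Q/4)).trans ?_
      have hInt : (∫ ω, -Real.cos (τstar * ν j ω) ∂μ)
          = -(∫ ω, Real.cos (τstar * ν j ω) ∂μ) := integral_neg _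
      rw [hInt]
      have hm := hgood j
      have h2 := analytic_good hQ0 hQ1
      nlinarith [hBge, mul_le_mul_of_nonneg_right hm hBge]
    have h := chernoff_aux (fun j ω => -Real.cos (τstar * ν j ω)) hmY hiY hbY
      (-thr) (Real.exp (-(3*Q^2/32))) (by linarith) (Real.exp_pos _).le hmgf
    have hset : {ω | (∑ j, Real.cos (τstar * ν j ω)) ≤ thr}
        = {ω | -thr ≤ ∑ j, -Real.cos (τstar * ν j ω)} := by
      ext ω; simp only [Set.mem_setOf_eq, Finset.sum_neg_distrib, neg_le_neg_iff]
    rw [hset]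
    refine h.trans ?_
    rw [← Real.exp_nat_mul, ← Real.exp_add]
    apply Real.exp_le_exp.2
    rw [hthr]; ring_nf; rfl
  -- estimate e
  have hM1 : (0:ℝ) < 20 * ((Θ.card : ℝ) + 1) := by positivity
  have hlog : Real.log (20 * ((Θ.card : ℝ) + 1)) ≤ (n : ℝ) * Q ^ 2 / 32 := by
    have hQ2 : (0:ℝ) < Q ^ 2 := by positivity
    rw [div_mul_eq_mul_div, div_le_iff₀ hQ2] at hn
    nlinarith
  have he_le : e ≤ 1 / (20 * ((Θ.card : ℝ) + 1)) := by
    rw [he]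
    have h1 : Real.exp (-((n : ℝ) * Q ^ 2 / 32)) ≤ Real.exp (-(Real.log (20 * ((Θ.card : ℝ) + 1)))) :=
      Real.exp_le_exp.2 (by linarith)
    have h2 : Real.exp (-(Real.log (20 * ((Θ.card : ℝ) + 1)))) = 1 / (20 * ((Θ.card : ℝ) + 1)) := by
      rw [Real.exp_neg, Real.exp_log hM1, one_div]
    exact h1.trans h2.le
  have he_pos : 0 < e := Real.exp_pos _
  -- the good event
  set G : Set Ω := {ω | thr ≤ ∑ j, Real.cos (τstar * ν j ω) ∧
      ∀ τ ∈ Θ, ∑ j, Real.cos (τ * ν j ω) < thr} with hG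
  have hSmeas : ∀ τ : ℝ, Measurable (fun ω => ∑ j, Real.cos (τ * ν j ω)) :=
    fun τ => Finset.measurable_sum _ (fun j _ => hmc τ j)
  have hGmeas : MeasurableSet G := by
    have : G = {ω | thr ≤ ∑ j, Real.cos (τstar * ν j ω)}
        ∩ ⋂ τ ∈ Θ, {ω | ∑ j, Real.cos (τ * ν j ω) < thr} := by
      ext ω; simp [hG, Set.mem_iInter]
    rw [this]
    exact (measurableSet_le measurable_const (hSmeas τstar)).inter
      (MeasurableSet.biInter Θ.countable_toSet
        (fun τ _ => measurableSet_lt (hSmeas τ) measurable_const))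
  -- union bound on the complement
  have hsub : Gᶜ ⊆ {ω | (∑ j, Real.cos (τstar * ν j ω)) ≤ thr}
      ∪ ⋃ τ ∈ Θ, {ω | thr ≤ ∑ j, Real.cos (τ * ν j ω)} := by
    intro ω hω
    simp only [hG, Set.mem_compl_iff, Set.mem_setOf_eq, not_and, not_forall, not_lt] at hω
    by_cases h1 : thr ≤ ∑ j, Real.cos (τstar * ν j ω)
    · obtain ⟨τ, hτ, hτ2⟩ := hω h1
      exact Or.inr (Set.mem_biUnion hτ hτ2)
    · exact Or.inl (le_of_not_ge h1)
  have hofReal : ∀ (A : Set Ω), (μ A).toReal ≤ e → μ A ≤ ENNReal.ofReal e := by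
    intro A h
    rw [← ENNReal.ofReal_toReal (measure_ne_top μ A)]
    exact ENNReal.ofReal_le_ofReal h
  have hcompl : μ Gᶜ ≤ ENNReal.ofReal 0.05 := by
    calc μ Gᶜ ≤ μ ({ω | (∑ j, Real.cos (τstar * ν j ω)) ≤ thr}
          ∪ ⋃ τ ∈ Θ, {ω | thr ≤ ∑ j, Real.cos (τ * ν j ω)}) := measure_mono hsub
      _ ≤ μ {ω | (∑ j, Real.cos (τstar * ν j ω)) ≤ thr}
          + μ (⋃ τ ∈ Θ, {ω | thr ≤ ∑ j, Real.cos (τ * ν j ω)}) := measure_union_le _ _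
      _ ≤ ENNReal.ofReal e + ∑ τ ∈ Θ, μ {ω | thr ≤ ∑ j, Real.cos (τ * ν j ω)} := by
          gcongr
          · exact hofReal _ hgoodtail
          · exact measure_biUnion_finset_le _ _
      _ ≤ ENNReal.ofReal e + ∑ τ ∈ Θ, ENNReal.ofReal e := by
          gcongr with τ hτ
          exact hofReal _ (hbadtail τ hτ)
      _ = ENNReal.ofReal e + (Θ.card : ENNReal) * ENNReal.ofReal e := by
          rw [Finset.sum_const, nsmul_eq_mul]
      _ = ENNReal.ofReal (e + Θ.card * e) := by
          rw [ENNReal.ofReal_add he_pos.le (by positivity),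
            ENNReal.ofReal_mul (by positivity : (0:ℝ) ≤ (Θ.card : ℝ)),
            ENNReal.ofReal_natCast]
      _ ≤ ENNReal.ofReal 0.05 := by
          apply ENNReal.ofReal_le_ofReal
          have h1 : e + (Θ.card : ℝ) * e = ((Θ.card : ℝ) + 1) * e := by ring
          rw [h1]
          have h2 : ((Θ.card : ℝ) + 1) * e ≤ ((Θ.card : ℝ) + 1) * (1 / (20 * ((Θ.card : ℝ) + 1))) := by
            gcongr
          refine h2.trans ?_
          rw [mul_one_div, div_le_iff₀ (by positivity)]
          push_cast
          nlinarith [Nat.cast_nonneg (α := ℝ) Θ.card]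
  have hGG : μ G = 1 - μ Gᶜ := by
    have := prob_compl_eq_one_sub (μ := μ) hGmeas.compl
    rwa [compl_compl] at this
  show ENNReal.ofReal 0.95 ≤ μ G
  rw [hGG]
  have : ENNReal.ofReal 0.95 = 1 - ENNReal.ofReal 0.05 := by
    rw [← ENNReal.ofReal_one, ← ENNReal.ofReal_sub _ (by norm_num)]
    norm_num
  rw [this]
  exact tsub_le_tsub_left hcompl 1
end

section
/- Let W be a nonnegative real-valued random variable and n > 0 a real number. Suppose E[√W] ≤ √n and that for every s > 0, P(√W − E[√W] > s) ≤ exp(−s²/(2n)). Then for every ε > 0, P(W − n > ε) ≤ exp(−ε/(2n) − 1 + √(1 + ε/n)). -/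
open MeasureTheory

/-- Tail-bound conversion showing that the per-flare score is approximately
sub-exponential: if `W ≥ 0`, `E[√W] ≤ √n`, and `√W` satisfies the sub-Gaussian tail
`P(√W − E[√W] > s) ≤ exp(−s²/(2n))` for all `s > 0`, then for every `ε > 0`,
`P(W − n > ε) ≤ exp(−ε/(2n) − 1 + √(1 + ε/n))`. -/
theorem subexponential_tail_conversion
    {Ω : Type*} [MeasurableSpace Ω] (μ : Measure Ω) [IsProbabilityMeasure μ]
    (W : Ω → ℝ) (hWmeas : Measurable W) (hWnonneg : ∀ ω, 0 ≤ W ω)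
    (n : ℝ) (hn : 0 < n)
    (hmean : (∫ ω, Real.sqrt (W ω) ∂μ) ≤ Real.sqrt n)
    (htail : ∀ s > (0 : ℝ),
      μ {ω | Real.sqrt (W ω) - (∫ ω', Real.sqrt (W ω') ∂μ) > s}
        ≤ ENNReal.ofReal (Real.exp (-(s ^ 2) / (2 * n)))) :
    ∀ ε > (0 : ℝ),
      μ {ω | W ω - n > ε}
        ≤ ENNReal.ofReal (Real.exp (-(ε / (2 * n)) - 1 + Real.sqrt (1 + ε / n))) := by
  intro ε hε
  set m := (∫ ω', Real.sqrt (W ω') ∂μ) with hm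
  set s := Real.sqrt (n + ε) - Real.sqrt n with hs
  have hne : (0:ℝ) < n + ε := by linarith
  have hslt : Real.sqrt n < Real.sqrt (n + ε) :=
    Real.sqrt_lt_sqrt hn.le (by linarith)
  have hspos : 0 < s := by simp [hs]; linarith
  have hsubset : {ω | W ω - n > ε} ⊆ {ω | Real.sqrt (W ω) - m > s} := by
    intro ω hω
    simp only [Set.mem_setOf_eq] at hω ⊢
    have h1 : Real.sqrt (n + ε) < Real.sqrt (W ω) :=
      Real.sqrt_lt_sqrt hne.le (by linarith)
    have : m ≤ Real.sqrt n := hmean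
    simp [hs]; linarith
  refine le_trans (measure_mono hsubset) (le_trans (htail s hspos) ?_)
  have hkey : -(s ^ 2) / (2 * n) = -(ε / (2 * n)) - 1 + Real.sqrt (1 + ε / n) := by
    have h1 : Real.sqrt (n + ε) ^ 2 = n + ε := Real.sq_sqrt hne.le
    have h2 : Real.sqrt n ^ 2 = n := Real.sq_sqrt hn.le
    have h3 : Real.sqrt (1 + ε / n) = Real.sqrt (n + ε) / Real.sqrt n := by
      rw [← Real.sqrt_div' _ hn.le]
      · congr 1; field_simp
    have hsn : (0:ℝ) < Real.sqrt n := Real.sqrt_pos.mpr hn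
    have hs2 : s ^ 2 = 2 * n + ε - 2 * (Real.sqrt n * Real.sqrt (n + ε)) := by
      have : s ^ 2 = Real.sqrt (n + ε) ^ 2 - 2 * (Real.sqrt n * Real.sqrt (n + ε))
          + Real.sqrt n ^ 2 := by rw [hs]; ring
      rw [this, h1, h2]; ring
    have h6 : Real.sqrt (n + ε) / Real.sqrt n
        = Real.sqrt n * Real.sqrt (n + ε) / n := by
      rw [eq_div_iff hn.ne']
      field_simp
      nlinarith [Real.mul_self_sqrt hn.le]
    rw [h3, hs2, h6]
    field_simp
    ring
  rw [hkey]
end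

section
/- Fix L ≥ 1 and q₀, …, q_{L−1} ∈ [0,1]. On a probability space, let (X_{k,v}) for 0 ≤ k < L and 0 ≤ v < 2^k be a family of independent {0,1}-valued random variables with P(X_{k,v} = 1) = q_k; for a leaf i ∈ {0,…,2^{L−1}−1} let a_k(i) = ⌊i/2^{L−1−k}⌋ and Y_i = ∏_{k=0}^{L−1} X_{k, a_k(i)}. Let P = ∏_{k=0}^{L−1} q_k. Then Var(Σ_{i=0}^{2^{L−1}−1} Y_i) = 2^{L−1}·P·(1−P) + 2·Σ_{k=0}^{L−2} 2^k·4^{L−2−k}·[ (∏_{m=0}^{k} q_m)·(∏_{m=k+1}^{L−1} q_m²) − P² ]. -/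
open MeasureTheory ProbabilityTheory

/-- The ancestor of leaf `i` (among the `2^(L−1)` leaves) in layer `k` of the complete
binary tree with `L` layers: `a_k(i) = ⌊i / 2^(L−1−k)⌋`, an index among the `2^k` nodes of
layer `k`. -/
def treeAncestor (L : ℕ) (k : Fin L) (i : Fin (2 ^ (L - 1))) : Fin (2 ^ (k : ℕ)) :=
  ⟨(i : ℕ) / 2 ^ (L - 1 - (k : ℕ)), by
    have hk := k.isLt
    have h2 : 0 < 2 ^ (L - 1 - (k : ℕ)) := by positivity
    rw [Nat.div_lt_iff_lt_mul h2]
    calc (i : ℕ) < 2 ^ (L - 1) := i.isLt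
      _ ≤ 2 ^ ((k : ℕ) + (L - 1 - (k : ℕ))) := by
          apply Nat.pow_le_pow_right (by norm_num); omega
      _ = 2 ^ (k : ℕ) * 2 ^ (L - 1 - (k : ℕ)) := pow_add 2 _ _⟩

lemma div_pow_eq_iff_xor_lt (i j t : ℕ) : i / 2 ^ t = j / 2 ^ t ↔ i ^^^ j < 2 ^ t := by
  have hsr : ∀ a b : ℕ, (a ^^^ b) >>> t = (a >>> t) ^^^ (b >>> t) := by
    intro a b
    apply Nat.eq_of_testBit_eq
    intro k
    simp [Nat.testBit_shiftRight, Nat.testBit_xor]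
  have h1 : i / 2 ^ t = j / 2 ^ t ↔ (i ^^^ j) >>> t = 0 := by
    rw [hsr, Nat.xor_eq_zero_iff, Nat.shiftRight_eq_div_pow, Nat.shiftRight_eq_div_pow]
  rw [h1, Nat.shiftRight_eq_div_pow, Nat.div_eq_zero_iff_lt (Nat.pow_pos two_pos)]

def treePath (L : ℕ) (i : Fin (2 ^ (L - 1))) : Finset (Σ k : Fin L, Fin (2 ^ (k : ℕ))) :=
  Finset.univ.image (fun k : Fin L => ⟨k, treeAncestor L k i⟩)

lemma treePath_prod (L : ℕ) (i : Fin (2 ^ (L - 1)))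
    (f : (Σ k : Fin L, Fin (2 ^ (k : ℕ))) → ℝ) :
    ∏ s ∈ treePath L i, f s = ∏ k : Fin L, f ⟨k, treeAncestor L k i⟩ :=
  Finset.prod_image (fun k _ k' _ h => congrArg Sigma.fst h)

lemma mem_treePath (L : ℕ) (i j : Fin (2 ^ (L - 1))) (k : Fin L) :
    ((⟨k, treeAncestor L k j⟩ : Σ k : Fin L, Fin (2 ^ (k : ℕ))) ∈ treePath L i)
      ↔ (i : ℕ) / 2 ^ (L - 1 - (k : ℕ)) = (j : ℕ) / 2 ^ (L - 1 - (k : ℕ)) := by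
  unfold treePath
  simp only [Finset.mem_image, Finset.mem_univ, true_and]
  constructor
  · rintro ⟨k', hk'⟩
    obtain ⟨h1, h2⟩ := Sigma.mk.inj_iff.1 hk'
    subst h1
    exact congrArg Fin.val (eq_of_heq h2)
  · intro h
    exact ⟨k, by rw [show treeAncestor L k i = treeAncestor L k j from Fin.ext h]⟩

lemma treePath_union_prod (L : ℕ) (q : ℕ → ℝ)
    (i j : Fin (2 ^ (L - 1))) (hij : i ≠ j) :
    (∏ s ∈ treePath L i ∪ treePath L j, q (s.1 : ℕ))
      = (∏ m ∈ Finset.range ((L - 1 - ((i : ℕ) ^^^ (j : ℕ)).size) + 1), q m)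
        * ∏ m ∈ Finset.Ico ((L - 1 - ((i : ℕ) ^^^ (j : ℕ)).size) + 1) L, q m ^ 2 := by
  have hxne : (i : ℕ) ^^^ (j : ℕ) ≠ 0 := fun h => hij (Fin.ext (Nat.xor_eq_zero_iff.1 h))
  have hxlt : (i : ℕ) ^^^ (j : ℕ) < 2 ^ (L - 1) := Nat.xor_lt_two_pow i.isLt j.isLt
  have hsz1 : 1 ≤ ((i : ℕ) ^^^ (j : ℕ)).size := Nat.size_pos.2 (Nat.pos_of_ne_zero hxne)
  have hszle : ((i : ℕ) ^^^ (j : ℕ)).size ≤ L - 1 := Nat.size_le.2 hxlt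
  have hL2 : 2 ≤ L := by omega
  set D := L - 1 - ((i : ℕ) ^^^ (j : ℕ)).size with hD
  have hDle : D + 1 ≤ L := by omega
  have hagr_iff : ∀ k : Fin L,
      (((i : ℕ) / 2 ^ (L - 1 - (k : ℕ)) = (j : ℕ) / 2 ^ (L - 1 - (k : ℕ))) ↔ (k : ℕ) < D + 1) := by
    intro k
    rw [div_pow_eq_iff_xor_lt, ← Nat.size_le]
    have := k.isLt
    omega
  have hdiff : treePath L j \ treePath L i
      = (Finset.univ.filter (fun k : Fin L => ¬ ((k : ℕ) < D + 1))).image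
          (fun k : Fin L => (⟨k, treeAncestor L k j⟩ : Σ k : Fin L, Fin (2 ^ (k : ℕ)))) := by
    ext s
    simp only [Finset.mem_sdiff, Finset.mem_image, Finset.mem_filter, Finset.mem_univ, true_and]
    constructor
    · rintro ⟨hsj, hsi⟩
      obtain ⟨k, -, rfl⟩ := Finset.mem_image.1 hsj
      refine ⟨k, ?_, rfl⟩
      intro hlt
      exact hsi ((mem_treePath L i j k).2 ((hagr_iff k).2 hlt))
    · rintro ⟨k, hk, rfl⟩
      refine ⟨(mem_treePath L j j k).2 rfl, fun h => hk ((hagr_iff k).1 ((mem_treePath L i j k).1 h))⟩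
  have hunion : treePath L i ∪ treePath L j = treePath L i ∪ (treePath L j \ treePath L i) :=
    (Finset.union_sdiff_self_eq_union).symm
  rw [hunion, Finset.prod_union Finset.disjoint_sdiff, hdiff,
    Finset.prod_image (fun k _ k' _ h => congrArg Sigma.fst h), treePath_prod]
  have h1 : (∏ k : Fin L, q ((⟨k, treeAncestor L k i⟩ : Σ k : Fin L, Fin (2 ^ (k : ℕ))).1 : ℕ))
      = ∏ m ∈ Finset.range L, q m := Fin.prod_univ_eq_prod_range (fun m => q m) L
  have h2 : (∏ k ∈ Finset.univ.filter (fun k : Fin L => ¬ ((k : ℕ) < D + 1)),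
        q (((⟨k, treeAncestor L k j⟩ : Σ k : Fin L, Fin (2 ^ (k : ℕ)))).1 : ℕ))
      = ∏ m ∈ Finset.Ico (D + 1) L, q m := by
    rw [Finset.prod_filter]
    rw [Fin.prod_univ_eq_prod_range (fun m => if ¬ (m < D + 1) then q m else 1) L]
    rw [← Finset.prod_filter]
    apply Finset.prod_congr _ (fun m _ => rfl)
    ext m
    simp only [Finset.mem_filter, Finset.mem_range, Finset.mem_Ico, not_lt]
    omega
  rw [h1, h2, ← Finset.prod_range_mul_prod_Ico q hDle]
  have h4 : (∏ m ∈ Finset.Ico (D + 1) L, q m ^ 2)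
      = (∏ m ∈ Finset.Ico (D + 1) L, q m) * ∏ m ∈ Finset.Ico (D + 1) L, q m := by
    rw [← Finset.prod_mul_distrib]
    exact Finset.prod_congr rfl fun m _ => sq (q m)
  rw [h4]
  ring


lemma prod01_union {ι : Type*} [DecidableEq ι] (f : ι → ℝ) (hf : ∀ s, f s = 0 ∨ f s = 1)
    (A B : Finset ι) : (∏ s ∈ A, f s) * ∏ s ∈ B, f s = ∏ s ∈ A ∪ B, f s := by
  by_cases h : ∀ s ∈ A ∪ B, f s = 1
  · rw [Finset.prod_eq_one h, Finset.prod_eq_one (fun s hs => h s (Finset.mem_union_left _ hs)),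
      Finset.prod_eq_one (fun s hs => h s (Finset.mem_union_right _ hs)), one_mul]
  · push_neg at h
    obtain ⟨s, hs, hfs⟩ := h
    have h0 : f s = 0 := (hf s).resolve_right hfs
    rw [Finset.prod_eq_zero hs h0]
    rcases Finset.mem_union.1 hs with h | h
    · rw [Finset.prod_eq_zero h h0, zero_mul]
    · rw [Finset.prod_eq_zero h h0, mul_zero]

lemma prod01_eq_indicator {ι Ω : Type*} (X : ι → Ω → ℝ) (hval : ∀ i ω, X i ω = 0 ∨ X i ω = 1)
    (S : Finset ι) (ω : Ω) :
    ∏ s ∈ S, X s ω = (⋂ s ∈ S, X s ⁻¹' {1}).indicator (1 : Ω → ℝ) ω := by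
  by_cases h : ω ∈ ⋂ s ∈ S, X s ⁻¹' {1}
  · rw [Set.indicator_of_mem h]
    simp only [Set.mem_iInter, Set.mem_preimage, Set.mem_singleton_iff] at h
    exact Finset.prod_eq_one fun s hs => h s hs
  · rw [Set.indicator_of_notMem h]
    simp only [Set.mem_iInter, Set.mem_preimage, Set.mem_singleton_iff, not_forall] at h
    obtain ⟨s, hs, h1⟩ := h
    exact Finset.prod_eq_zero hs ((hval s ω).resolve_right h1)

lemma exp_prod01 {Ω : Type*} [MeasurableSpace Ω] {μ : Measure Ω} [IsProbabilityMeasure μ]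
    {ι : Type*} (X : ι → Ω → ℝ) (hmeas : ∀ i, Measurable (X i))
    (hindep : iIndepFun X μ)
    (hval : ∀ i ω, X i ω = 0 ∨ X i ω = 1)
    (r : ι → ℝ) (hr : ∀ i, 0 ≤ r i)
    (hdist : ∀ i, μ {ω | X i ω = 1} = ENNReal.ofReal (r i))
    (S : Finset ι) :
    Integrable (fun ω => ∏ s ∈ S, X s ω) μ ∧
      ∫ ω, ∏ s ∈ S, X s ω ∂μ = ∏ s ∈ S, r s := by
  have hdist' : ∀ i, μ (X i ⁻¹' {1}) = ENNReal.ofReal (r i) := hdist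
  have hIm : MeasurableSet (⋂ s ∈ S, X s ⁻¹' {1}) :=
    MeasurableSet.biInter S.countable_toSet
      (fun s _ => (hmeas s) (measurableSet_singleton 1))
  have hfun : (fun ω => ∏ s ∈ S, X s ω)
      = (⋂ s ∈ S, X s ⁻¹' {1}).indicator (1 : Ω → ℝ) :=
    funext fun ω => prod01_eq_indicator X hval S ω
  constructor
  · rw [hfun]
    exact (integrable_const (1:ℝ)).indicator hIm
  · rw [hfun, integral_indicator_one hIm]
    have hmb := hindep.meas_biInter (S := S) (s := fun i => X i ⁻¹' {1})
      (fun i _ => ⟨{1}, measurableSet_singleton 1, rfl⟩)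
    rw [Measure.real, hmb, ENNReal.toReal_prod]
    exact Finset.prod_congr rfl fun s _ => by rw [hdist' s, ENNReal.toReal_ofReal (hr s)]

lemma count_div_eq (n t : ℕ) (ht : t ≤ n) (c : ℕ) (hc : c < 2 ^ (n - t)) :
    ((Finset.univ : Finset (Fin (2 ^ n))).filter
      (fun j : Fin (2 ^ n) => (j : ℕ) / 2 ^ t = c)).card = 2 ^ t := by
  have hb : ∀ v : ℕ, v < 2 ^ t → c * 2 ^ t + v < 2 ^ n := by
    intro v hv
    calc c * 2 ^ t + v < (c + 1) * 2 ^ t := by rw [add_mul, one_mul]; omega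
      _ ≤ 2 ^ (n - t) * 2 ^ t := Nat.mul_le_mul_right _ hc
      _ = 2 ^ n := by rw [← pow_add]; congr 1; omega
  have himg : ((Finset.univ : Finset (Fin (2 ^ n))).filter
        (fun j : Fin (2 ^ n) => (j : ℕ) / 2 ^ t = c))
      = (Finset.univ : Finset (Fin (2 ^ t))).image
          (fun v : Fin (2 ^ t) => (⟨c * 2 ^ t + (v : ℕ), hb v v.isLt⟩ : Fin (2 ^ n))) := by
    ext j
    simp only [Finset.mem_filter, Finset.mem_univ, true_and, Finset.mem_image]
    constructor
    · intro hj
      have hv : (j : ℕ) % 2 ^ t < 2 ^ t := Nat.mod_lt _ (Nat.pow_pos two_pos)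
      refine ⟨⟨(j : ℕ) % 2 ^ t, hv⟩, ?_⟩
      apply Fin.ext
      show c * 2 ^ t + (j : ℕ) % 2 ^ t = (j : ℕ)
      rw [← hj, Nat.div_add_mod']
    · rintro ⟨v, rfl⟩
      show (c * 2 ^ t + (v : ℕ)) / 2 ^ t = c
      rw [mul_comm c, Nat.mul_add_div (Nat.pow_pos two_pos),
        Nat.div_eq_of_lt v.isLt, add_zero]
  rw [himg, Finset.card_image_of_injective _ ?_, Finset.card_univ, Fintype.card_fin]
  intro v v' h
  have := congrArg Fin.val h
  simp only at this
  exact Fin.ext (by omega)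

lemma count_pairs_agree (n t : ℕ) (ht : t ≤ n) :
    ((Finset.univ : Finset (Fin (2 ^ n) × Fin (2 ^ n))).filter
      (fun p => (p.1 : ℕ) / 2 ^ t = (p.2 : ℕ) / 2 ^ t)).card = 2 ^ n * 2 ^ t := by
  have key : ∀ i : Fin (2 ^ n),
      (∑ j : Fin (2 ^ n), if (i : ℕ) / 2 ^ t = (j : ℕ) / 2 ^ t then (1:ℕ) else 0) = 2 ^ t := by
    intro i
    have hc : (i : ℕ) / 2 ^ t < 2 ^ (n - t) := by
      rw [Nat.div_lt_iff_lt_mul (Nat.pow_pos two_pos), ← pow_add]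
      have hnt : t + (n - t) = n := by omega
      rw [Nat.add_comm, hnt]
      exact i.isLt
    have hcard := count_div_eq n t ht ((i : ℕ) / 2 ^ t) hc
    calc (∑ j : Fin (2 ^ n), if (i : ℕ) / 2 ^ t = (j : ℕ) / 2 ^ t then (1:ℕ) else 0)
        = ((Finset.univ : Finset (Fin (2 ^ n))).filter
            (fun j : Fin (2 ^ n) => (j : ℕ) / 2 ^ t = (i : ℕ) / 2 ^ t)).card := by
          rw [Finset.card_filter]
          exact Finset.sum_congr rfl fun j _ => by simp [eq_comm]
      _ = 2 ^ t := hcard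
  rw [Finset.card_filter, Fintype.sum_prod_type,
    Finset.sum_congr rfl (fun i _ => key i), Finset.sum_const, Finset.card_univ,
    Fintype.card_fin, smul_eq_mul]



lemma div_pow_eq_iff_xor_lt' (i j t : ℕ) : i / 2 ^ t = j / 2 ^ t ↔ i ^^^ j < 2 ^ t := by
  have hsr : ∀ a b : ℕ, (a ^^^ b) >>> t = (a >>> t) ^^^ (b >>> t) := by
    intro a b
    apply Nat.eq_of_testBit_eq
    intro k
    simp [Nat.testBit_shiftRight, Nat.testBit_xor]
  have h1 : i / 2 ^ t = j / 2 ^ t ↔ (i ^^^ j) >>> t = 0 := by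
    rw [hsr, Nat.xor_eq_zero_iff, Nat.shiftRight_eq_div_pow, Nat.shiftRight_eq_div_pow]
  rw [h1, Nat.shiftRight_eq_div_pow, Nat.div_eq_zero_iff_lt (Nat.pow_pos two_pos)]

lemma count_div_eq' (n t : ℕ) (ht : t ≤ n) (c : ℕ) (hc : c < 2 ^ (n - t)) :
    ((Finset.univ : Finset (Fin (2 ^ n))).filter
      (fun j : Fin (2 ^ n) => (j : ℕ) / 2 ^ t = c)).card = 2 ^ t := by
  have hb : ∀ v : ℕ, v < 2 ^ t → c * 2 ^ t + v < 2 ^ n := by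
    intro v hv
    calc c * 2 ^ t + v < (c + 1) * 2 ^ t := by rw [add_mul, one_mul]; omega
      _ ≤ 2 ^ (n - t) * 2 ^ t := Nat.mul_le_mul_right _ hc
      _ = 2 ^ n := by rw [← pow_add]; congr 1; omega
  have himg : ((Finset.univ : Finset (Fin (2 ^ n))).filter
        (fun j : Fin (2 ^ n) => (j : ℕ) / 2 ^ t = c))
      = (Finset.univ : Finset (Fin (2 ^ t))).image
          (fun v : Fin (2 ^ t) => (⟨c * 2 ^ t + (v : ℕ), hb v v.isLt⟩ : Fin (2 ^ n))) := by
    ext j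
    simp only [Finset.mem_filter, Finset.mem_univ, true_and, Finset.mem_image]
    constructor
    · intro hj
      have hv : (j : ℕ) % 2 ^ t < 2 ^ t := Nat.mod_lt _ (Nat.pow_pos two_pos)
      refine ⟨⟨(j : ℕ) % 2 ^ t, hv⟩, ?_⟩
      apply Fin.ext
      show c * 2 ^ t + (j : ℕ) % 2 ^ t = (j : ℕ)
      rw [← hj, Nat.div_add_mod']
    · rintro ⟨v, rfl⟩
      show (c * 2 ^ t + (v : ℕ)) / 2 ^ t = c
      rw [mul_comm c, Nat.mul_add_div (Nat.pow_pos two_pos),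
        Nat.div_eq_of_lt v.isLt, add_zero]
  rw [himg, Finset.card_image_of_injective _ ?_, Finset.card_univ, Fintype.card_fin]
  intro v v' h
  have := congrArg Fin.val h
  simp only at this
  exact Fin.ext (by omega)

lemma count_pairs_agree' (n t : ℕ) (ht : t ≤ n) :
    ((Finset.univ : Finset (Fin (2 ^ n) × Fin (2 ^ n))).filter
      (fun p => (p.1 : ℕ) / 2 ^ t = (p.2 : ℕ) / 2 ^ t)).card = 2 ^ n * 2 ^ t := by
  have key : ∀ i : Fin (2 ^ n),
      (∑ j : Fin (2 ^ n), if (i : ℕ) / 2 ^ t = (j : ℕ) / 2 ^ t then (1:ℕ) else 0) = 2 ^ t := by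
    intro i
    have hc : (i : ℕ) / 2 ^ t < 2 ^ (n - t) := by
      rw [Nat.div_lt_iff_lt_mul (Nat.pow_pos two_pos), ← pow_add]
      have hnt : t + (n - t) = n := by omega
      rw [Nat.add_comm, hnt]
      exact i.isLt
    have hcard := count_div_eq' n t ht ((i : ℕ) / 2 ^ t) hc
    calc (∑ j : Fin (2 ^ n), if (i : ℕ) / 2 ^ t = (j : ℕ) / 2 ^ t then (1:ℕ) else 0)
        = ((Finset.univ : Finset (Fin (2 ^ n))).filter
            (fun j : Fin (2 ^ n) => (j : ℕ) / 2 ^ t = (i : ℕ) / 2 ^ t)).card := by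
          rw [Finset.card_filter]
          exact Finset.sum_congr rfl fun j _ => by simp [eq_comm]
      _ = 2 ^ t := hcard
  rw [Finset.card_filter, Fintype.sum_prod_type,
    Finset.sum_congr rfl (fun i _ => key i), Finset.sum_const, Finset.card_univ,
    Fintype.card_fin, smul_eq_mul]

lemma tree_fiber_card (L : ℕ) (k : ℕ) (hk : k < L - 1) :
    ((Finset.univ : Finset (Fin (2 ^ (L - 1)) × Fin (2 ^ (L - 1)))).filter
      (fun p => ¬ p.1 = p.2 ∧ L - 1 - ((p.1 : ℕ) ^^^ (p.2 : ℕ)).size = k)).card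
      = 2 ^ (L - 1) * 2 ^ (L - 2 - k) := by
  set t := L - 1 - k with ht
  have ht1 : 1 ≤ t := by omega
  have htle : t ≤ L - 1 := by omega
  have hcond : ∀ p : Fin (2 ^ (L - 1)) × Fin (2 ^ (L - 1)),
      (¬ p.1 = p.2 ∧ L - 1 - ((p.1 : ℕ) ^^^ (p.2 : ℕ)).size = k)
        ↔ ((p.1 : ℕ) / 2 ^ t = (p.2 : ℕ) / 2 ^ t
            ∧ ¬ ((p.1 : ℕ) / 2 ^ (t - 1) = (p.2 : ℕ) / 2 ^ (t - 1))) := by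
    intro p
    rw [div_pow_eq_iff_xor_lt', div_pow_eq_iff_xor_lt', ← Nat.size_le, ← Nat.size_le]
    constructor
    · rintro ⟨hne, hk'⟩
      have hx0 : (p.1 : ℕ) ^^^ (p.2 : ℕ) ≠ 0 := fun h => hne (Fin.ext (Nat.xor_eq_zero_iff.1 h))
      have hs1 : 1 ≤ ((p.1 : ℕ) ^^^ (p.2 : ℕ)).size := Nat.size_pos.2 (Nat.pos_of_ne_zero hx0)
      have hsle : ((p.1 : ℕ) ^^^ (p.2 : ℕ)).size ≤ L - 1 :=
        Nat.size_le.2 (Nat.xor_lt_two_pow p.1.isLt p.2.isLt)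
      constructor <;> omega
    · rintro ⟨h1, h2⟩
      have hs : ((p.1 : ℕ) ^^^ (p.2 : ℕ)).size = t := by omega
      have hx0 : (p.1 : ℕ) ^^^ (p.2 : ℕ) ≠ 0 := by
        intro h
        rw [h, Nat.size_zero] at hs
        omega
      refine ⟨fun h => hx0 (by rw [h, Nat.xor_self]), by omega⟩
  rw [Finset.filter_congr (fun p _ => hcond p)]
  have hmono : ∀ p : Fin (2 ^ (L - 1)) × Fin (2 ^ (L - 1)),
      (p.1 : ℕ) / 2 ^ (t - 1) = (p.2 : ℕ) / 2 ^ (t - 1) →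
      (p.1 : ℕ) / 2 ^ t = (p.2 : ℕ) / 2 ^ t := by
    intro p h
    rw [div_pow_eq_iff_xor_lt'] at h ⊢
    exact lt_of_lt_of_le h (Nat.pow_le_pow_right (by norm_num) (by omega))
  have hkey := Finset.card_filter_add_card_filter_not
    (s := (Finset.univ : Finset (Fin (2 ^ (L - 1)) × Fin (2 ^ (L - 1)))).filter
      (fun p => (p.1 : ℕ) / 2 ^ t = (p.2 : ℕ) / 2 ^ t))
    (p := fun p => (p.1 : ℕ) / 2 ^ (t - 1) = (p.2 : ℕ) / 2 ^ (t - 1))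
  rw [Finset.filter_filter, Finset.filter_filter] at hkey
  have hsub : ((Finset.univ : Finset (Fin (2 ^ (L - 1)) × Fin (2 ^ (L - 1)))).filter
        (fun p => (p.1 : ℕ) / 2 ^ t = (p.2 : ℕ) / 2 ^ t
          ∧ (p.1 : ℕ) / 2 ^ (t - 1) = (p.2 : ℕ) / 2 ^ (t - 1)))
      = (Finset.univ : Finset (Fin (2 ^ (L - 1)) × Fin (2 ^ (L - 1)))).filter
        (fun p => (p.1 : ℕ) / 2 ^ (t - 1) = (p.2 : ℕ) / 2 ^ (t - 1)) := by
    apply Finset.filter_congr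
    intro p _
    constructor
    · rintro ⟨-, h⟩; exact h
    · intro h; exact ⟨hmono p h, h⟩
  rw [hsub] at hkey
  have hNt := count_pairs_agree' (L - 1) t htle
  have hNt1 := count_pairs_agree' (L - 1) (t - 1) (by omega)
  have h2t : (2:ℕ) ^ (L - 1) * 2 ^ t = 2 * (2 ^ (L - 1) * 2 ^ (t - 1)) := by
    have : (2:ℕ) ^ t = 2 * 2 ^ (t - 1) := by
      rw [← pow_succ']
      congr 1
      omega
    rw [this]
    ring
  have htk : t - 1 = L - 2 - k := by omega
  rw [htk] at hNt1 hkey h2t ⊢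
  rw [hNt1, hNt, h2t] at hkey
  omega

/-- Variance of the number of unblocked ray bundles in the binary-tree dust-extinction
model: with `P = ∏_k q_k` the photon survival probability,
`Var(Σ_i Y_i) = 2^(L−1)·P·(1−P)
  + 2·Σ_{k=0}^{L−2} 2^k·4^(L−2−k)·[(∏_{m=0}^{k} q_m)·(∏_{m=k+1}^{L−1} q_m²) − P²]`. -/
theorem tree_unblocked_count_variance
    {Ω : Type*} [MeasurableSpace Ω] (μ : Measure Ω) [IsProbabilityMeasure μ]
    (L : ℕ) (hL : 1 ≤ L) (q : ℕ → ℝ) (hq : ∀ k, q k ∈ Set.Icc (0 : ℝ) 1)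
    (X : (Σ k : Fin L, Fin (2 ^ (k : ℕ))) → Ω → ℝ)
    (hmeas : ∀ idx, Measurable (X idx))
    (hindep : iIndepFun X μ)
    (hval : ∀ idx ω, X idx ω = 0 ∨ X idx ω = 1)
    (hdist : ∀ idx : Σ k : Fin L, Fin (2 ^ (k : ℕ)),
      μ {ω | X idx ω = 1} = ENNReal.ofReal (q (idx.1 : ℕ))) :
    variance (fun ω => ∑ i : Fin (2 ^ (L - 1)), ∏ k : Fin L, X ⟨k, treeAncestor L k i⟩ ω) μ
      = (2 : ℝ) ^ (L - 1) * (∏ m ∈ Finset.range L, q m) * (1 - ∏ m ∈ Finset.range L, q m)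
        + 2 * ∑ k ∈ Finset.range (L - 1),
            (2 : ℝ) ^ k * (4 : ℝ) ^ (L - 2 - k) *
              ((∏ m ∈ Finset.range (k + 1), q m) * (∏ m ∈ Finset.Ico (k + 1) L, (q m) ^ 2)
                - (∏ m ∈ Finset.range L, q m) ^ 2) := by
  classical
  have hq0 : ∀ m, 0 ≤ q m := fun m => (hq m).1
  have hEP : ∀ S : Finset (Σ k : Fin L, Fin (2 ^ (k : ℕ))),
      Integrable (fun ω => ∏ s ∈ S, X s ω) μ ∧
        ∫ ω, ∏ s ∈ S, X s ω ∂μ = ∏ s ∈ S, q ((s.1 : ℕ)) :=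
    exp_prod01 X hmeas hindep hval (fun s => q (s.1 : ℕ)) (fun s => hq0 _) hdist
  set S : Ω → ℝ := fun ω => ∑ i : Fin (2 ^ (L - 1)), ∏ s ∈ treePath L i, X s ω with hSdef
  have hgoalfun : (fun ω => ∑ i : Fin (2 ^ (L - 1)), ∏ k : Fin L, X ⟨k, treeAncestor L k i⟩ ω)
      = S := by
    funext ω
    exact Finset.sum_congr rfl fun i _ => (treePath_prod L i (fun s => X s ω)).symm
  rw [hgoalfun]
  have hY01 : ∀ (i : Fin (2 ^ (L - 1))) (ω : Ω),
      (∏ s ∈ treePath L i, X s ω) = 0 ∨ (∏ s ∈ treePath L i, X s ω) = 1 := by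
    intro i ω
    rw [prod01_eq_indicator X hval]
    by_cases h : ω ∈ ⋂ s ∈ treePath L i, X s ⁻¹' {1}
    · right; rw [Set.indicator_of_mem h]; rfl
    · left; rw [Set.indicator_of_notMem h]
  have hSmeas : Measurable S := by
    apply Finset.measurable_sum
    intro i _
    exact Finset.measurable_prod _ (fun s _ => hmeas s)
  have hSbd : ∀ ω, ‖S ω‖ ≤ ((2 ^ (L - 1) : ℕ) : ℝ) := by
    intro ω
    rw [Real.norm_eq_abs]
    calc |S ω| ≤ ∑ i : Fin (2 ^ (L - 1)), |∏ s ∈ treePath L i, X s ω| :=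
        Finset.abs_sum_le_sum_abs _ _
      _ ≤ ∑ _i : Fin (2 ^ (L - 1)), (1:ℝ) := by
          apply Finset.sum_le_sum
          intro i _
          rcases hY01 i ω with h | h <;> rw [h] <;> norm_num
      _ = ((2 ^ (L - 1) : ℕ) : ℝ) := by
          rw [Finset.sum_const, Finset.card_univ, Fintype.card_fin, nsmul_eq_mul, mul_one]
  have hmem2 : MemLp S 2 μ :=
    MemLp.of_bound hSmeas.aestronglyMeasurable _ (ae_of_all μ hSbd)
  rw [variance_eq_sub hmem2]
  have hYint : ∀ i : Fin (2 ^ (L - 1)),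
      ∫ ω, ∏ s ∈ treePath L i, X s ω ∂μ = ∏ m ∈ Finset.range L, q m := by
    intro i
    rw [(hEP (treePath L i)).2, treePath_prod L i (fun s => q (s.1 : ℕ))]
    exact Fin.prod_univ_eq_prod_range (fun m => q m) L
  have hES : ∫ ω, S ω ∂μ = (2:ℝ) ^ (L - 1) * ∏ m ∈ Finset.range L, q m := by
    simp only [hSdef]
    rw [integral_finset_sum _ (fun i _ => (hEP (treePath L i)).1)]
    rw [Finset.sum_congr rfl (fun i _ => hYint i), Finset.sum_const, Finset.card_univ,
      Fintype.card_fin, nsmul_eq_mul]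
    push_cast
    ring
  have hESq : ∫ ω, (S ^ 2) ω ∂μ
      = ∑ p : Fin (2 ^ (L - 1)) × Fin (2 ^ (L - 1)),
          ∏ s ∈ treePath L p.1 ∪ treePath L p.2, q (s.1 : ℕ) := by
    have hfun : (fun ω => (S ^ 2) ω)
        = fun ω => ∑ p : Fin (2 ^ (L - 1)) × Fin (2 ^ (L - 1)),
            ∏ s ∈ treePath L p.1 ∪ treePath L p.2, X s ω := by
      funext ω
      rw [Pi.pow_apply, pow_two]
      simp only [hSdef]
      rw [Finset.sum_mul_sum, ← Finset.sum_product', Finset.univ_product_univ]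
      exact Finset.sum_congr rfl fun p _ =>
        prod01_union (fun s => X s ω) (fun s => hval s ω) _ _
    rw [hfun, integral_finset_sum _ (fun p _ => (hEP _).1)]
    exact Finset.sum_congr rfl fun p _ => (hEP _).2
  have hsplit : (∑ p : Fin (2 ^ (L - 1)) × Fin (2 ^ (L - 1)),
          ∏ s ∈ treePath L p.1 ∪ treePath L p.2, q (s.1 : ℕ))
      = (2:ℝ) ^ (L - 1) * (∏ m ∈ Finset.range L, q m)
        + ∑ k ∈ Finset.range (L - 1),
            (2:ℝ) ^ (L - 1) * (2:ℝ) ^ (L - 2 - k) *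
              ((∏ m ∈ Finset.range (k + 1), q m) * (∏ m ∈ Finset.Ico (k + 1) L, (q m) ^ 2)) := by
    rw [← Finset.sum_filter_add_sum_filter_not Finset.univ (fun p => p.1 = p.2)]
    congr 1
    · have himg : (Finset.univ : Finset (Fin (2 ^ (L - 1)) × Fin (2 ^ (L - 1)))).filter
          (fun p => p.1 = p.2)
          = Finset.univ.image (fun i : Fin (2 ^ (L - 1)) => (i, i)) := by
        ext p
        simp only [Finset.mem_filter, Finset.mem_univ, true_and, Finset.mem_image]
        constructor
        · intro h
          exact ⟨p.1, Prod.ext rfl h⟩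
        · rintro ⟨i, rfl⟩
          rfl
      rw [himg, Finset.sum_image (fun i _ i' _ h => (Prod.ext_iff.1 h).1)]
      have hdiagval : ∀ i : Fin (2 ^ (L - 1)),
          (∏ s ∈ treePath L i ∪ treePath L i, q (s.1 : ℕ)) = ∏ m ∈ Finset.range L, q m := by
        intro i
        rw [Finset.union_self, treePath_prod L i (fun s => q (s.1 : ℕ))]
        exact Fin.prod_univ_eq_prod_range (fun m => q m) L
      rw [Finset.sum_congr rfl (fun i _ => hdiagval i), Finset.sum_const, Finset.card_univ,
        Fintype.card_fin, nsmul_eq_mul]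
      push_cast
      ring
    · show (∑ p ∈ (Finset.univ : Finset (Fin (2 ^ (L - 1)) × Fin (2 ^ (L - 1)))).filter
          (fun p => ¬ p.1 = p.2), ∏ s ∈ treePath L p.1 ∪ treePath L p.2, q (s.1 : ℕ))
          = ∑ k ∈ Finset.range (L - 1),
              (2:ℝ) ^ (L - 1) * (2:ℝ) ^ (L - 2 - k) *
                ((∏ m ∈ Finset.range (k + 1), q m) * (∏ m ∈ Finset.Ico (k + 1) L, (q m) ^ 2))
      have hoff1 : ∀ p ∈ (Finset.univ : Finset (Fin (2 ^ (L - 1)) × Fin (2 ^ (L - 1)))).filter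
          (fun p => ¬ p.1 = p.2),
          (∏ s ∈ treePath L p.1 ∪ treePath L p.2, q (s.1 : ℕ))
            = (∏ m ∈ Finset.range ((L - 1 - ((p.1 : ℕ) ^^^ (p.2 : ℕ)).size) + 1), q m)
              * ∏ m ∈ Finset.Ico ((L - 1 - ((p.1 : ℕ) ^^^ (p.2 : ℕ)).size) + 1) L, q m ^ 2 := by
        intro p hp
        exact treePath_union_prod L q p.1 p.2 (Finset.mem_filter.1 hp).2
      rw [Finset.sum_congr rfl hoff1]
      have hmaps : ∀ p ∈ (Finset.univ : Finset (Fin (2 ^ (L - 1)) × Fin (2 ^ (L - 1)))).filter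
          (fun p => ¬ p.1 = p.2),
          (L - 1 - ((p.1 : ℕ) ^^^ (p.2 : ℕ)).size) ∈ Finset.range (L - 1) := by
        intro p hp
        have hne : ¬ p.1 = p.2 := (Finset.mem_filter.1 hp).2
        have hx0 : (p.1 : ℕ) ^^^ (p.2 : ℕ) ≠ 0 := fun h => hne (Fin.ext (Nat.xor_eq_zero_iff.1 h))
        have hs1 : 1 ≤ ((p.1 : ℕ) ^^^ (p.2 : ℕ)).size := Nat.size_pos.2 (Nat.pos_of_ne_zero hx0)
        have hsle : ((p.1 : ℕ) ^^^ (p.2 : ℕ)).size ≤ L - 1 :=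
          Nat.size_le.2 (Nat.xor_lt_two_pow p.1.isLt p.2.isLt)
        rw [Finset.mem_range]
        omega
      rw [← Finset.sum_fiberwise_of_maps_to hmaps
        (fun p => (∏ m ∈ Finset.range ((L - 1 - ((p.1 : ℕ) ^^^ (p.2 : ℕ)).size) + 1), q m)
          * ∏ m ∈ Finset.Ico ((L - 1 - ((p.1 : ℕ) ^^^ (p.2 : ℕ)).size) + 1) L, q m ^ 2)]
      apply Finset.sum_congr rfl
      intro k hk
      have hk' := Finset.mem_range.1 hk
      have hinner : ∀ p ∈ ((Finset.univ : Finset (Fin (2 ^ (L - 1)) × Fin (2 ^ (L - 1)))).filter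
          (fun p => ¬ p.1 = p.2)).filter
            (fun p => L - 1 - ((p.1 : ℕ) ^^^ (p.2 : ℕ)).size = k),
          ((∏ m ∈ Finset.range ((L - 1 - ((p.1 : ℕ) ^^^ (p.2 : ℕ)).size) + 1), q m)
            * ∏ m ∈ Finset.Ico ((L - 1 - ((p.1 : ℕ) ^^^ (p.2 : ℕ)).size) + 1) L, q m ^ 2)
          = ((∏ m ∈ Finset.range (k + 1), q m) * ∏ m ∈ Finset.Ico (k + 1) L, q m ^ 2) := by
        intro p hp
        rw [(Finset.mem_filter.1 hp).2]
      rw [Finset.sum_congr rfl hinner, Finset.sum_const]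
      have hcard : (((Finset.univ : Finset (Fin (2 ^ (L - 1)) × Fin (2 ^ (L - 1)))).filter
          (fun p => ¬ p.1 = p.2)).filter
            (fun p => L - 1 - ((p.1 : ℕ) ^^^ (p.2 : ℕ)).size = k)).card
          = 2 ^ (L - 1) * 2 ^ (L - 2 - k) := by
        rw [Finset.filter_filter]
        exact tree_fiber_card L k hk'
      rw [hcard, nsmul_eq_mul]
      push_cast
      ring
  rw [hESq, hES, hsplit]
  have hgeom : ∑ k ∈ Finset.range (L - 1), (2:ℝ) ^ (L - 2 - k) = 2 ^ (L - 1) - 1 := by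
    have h1 : ∀ k ∈ Finset.range (L - 1),
        (2:ℝ) ^ (L - 2 - k) = (fun j => (2:ℝ) ^ j) ((L - 1) - 1 - k) := by
      intro k hk
      have h2 : L - 2 - k = (L - 1) - 1 - k := by omega
      simp only
      rw [h2]
    rw [Finset.sum_congr rfl h1, Finset.sum_range_reflect (fun j => (2:ℝ) ^ j) (L - 1),
      geom_sum_eq (by norm_num : (2:ℝ) ≠ 1) (L - 1)]
    norm_num
  have hterm : ∀ k ∈ Finset.range (L - 1),
      (2:ℝ) * ((2:ℝ) ^ k * (4:ℝ) ^ (L - 2 - k) *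
        ((∏ m ∈ Finset.range (k + 1), q m) * (∏ m ∈ Finset.Ico (k + 1) L, (q m) ^ 2)
          - (∏ m ∈ Finset.range L, q m) ^ 2))
      = (2:ℝ) ^ (L - 1) * (2:ℝ) ^ (L - 2 - k) *
          ((∏ m ∈ Finset.range (k + 1), q m) * (∏ m ∈ Finset.Ico (k + 1) L, (q m) ^ 2))
        - (2:ℝ) ^ (L - 1) * ((2:ℝ) ^ (L - 2 - k) * (∏ m ∈ Finset.range L, q m) ^ 2) := by
    intro k hk
    have hk' := Finset.mem_range.1 hk
    have h4 : (4:ℝ) ^ (L - 2 - k) = (2:ℝ) ^ (L - 2 - k) * (2:ℝ) ^ (L - 2 - k) := by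
      rw [show (4:ℝ) = 2 * 2 by norm_num, mul_pow]
    have hA : (2:ℝ) ^ (L - 1) = (2:ℝ) ^ k * (2:ℝ) ^ (L - 2 - k) * 2 := by
      rw [show L - 1 = k + (L - 2 - k) + 1 by omega, pow_succ, pow_add]
    rw [h4, hA]
    ring
  have hsum2 : 2 * ∑ k ∈ Finset.range (L - 1),
        (2 : ℝ) ^ k * (4 : ℝ) ^ (L - 2 - k) *
          ((∏ m ∈ Finset.range (k + 1), q m) * (∏ m ∈ Finset.Ico (k + 1) L, (q m) ^ 2)
            - (∏ m ∈ Finset.range L, q m) ^ 2)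
      = (∑ k ∈ Finset.range (L - 1),
          (2:ℝ) ^ (L - 1) * (2:ℝ) ^ (L - 2 - k) *
            ((∏ m ∈ Finset.range (k + 1), q m) * (∏ m ∈ Finset.Ico (k + 1) L, (q m) ^ 2)))
        - (2:ℝ) ^ (L - 1) * (((2:ℝ) ^ (L - 1) - 1) * (∏ m ∈ Finset.range L, q m) ^ 2) := by
    rw [Finset.mul_sum, Finset.sum_congr rfl hterm, Finset.sum_sub_distrib, ← Finset.mul_sum,
      ← Finset.sum_mul, hgeom]
  rw [hsum2]
  ring
end
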